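/- Let T be a triangulated category with a t-structure and E ∈ T. The following are equivalent: (1) E is a derived injective, i.e. there is an injective object I of T^♥ and a natural isomorphism T(−, E) ≅ T^♥(H^0(−), I); (2) E ∈ T_{≥0} and T(Z[-1], E) ≅ 0 for every Z ∈ T_{≥0}. -/

import Mathlib

open CategoryTheory Limits Pretriangulated Triangulated Opposite

namespace DGP

universe v u

variable {C : Type u} [Category.{v} C] [Preadditive C] [HasZeroObject C] [HasShift C ℤ]
  [∀ n : ℤ, (shiftFunctor C n).Additive] [Pretriangulated C]

/-- A morphism `f : A ⟶ B` is a t-monomorphism if its cone lies in `T_{≥0}`. -/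
def IsTMono (t : TStructure C) {A B : C} (f : A ⟶ B) : Prop :=
  ∃ (Z : C) (g : B ⟶ Z) (h : Z ⟶ A⟦(1 : ℤ)⟧),
    Triangle.mk f g h ∈ (distTriang C) ∧ t.ge 0 Z

/-- A morphism `f : A ⟶ B` is a t-epimorphism if `cone(f)[-1]` lies in `T_{≤0}`,
equivalently it fits in a distinguished triangle `Z ⟶ A ⟶ B` with `Z ∈ T_{≤0}`. -/
def IsTEpi (t : TStructure C) {A B : C} (f : A ⟶ B) : Prop :=
  ∃ (Z : C) (g : Z ⟶ A) (h : B ⟶ Z⟦(1 : ℤ)⟧),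
    Triangle.mk g f h ∈ (distTriang C) ∧ t.le 0 Z

/-- The heart of a t-structure, as a full subcategory. -/
abbrev Heart (t : TStructure C) := ObjectProperty.FullSubcategory (fun X => t.le 0 X ∧ t.ge 0 X)

/-- The inclusion of the heart. -/
abbrev heartι (t : TStructure C) : Heart t ⥤ C := ObjectProperty.ι _

/-- Truncation data for a t-structure: truncation functors `τ≤n`, `τ≥n` together with
their universal properties and the truncation distinguished triangles. -/
structure TruncData (t : TStructure C) where
  τle : ℤ → C ⥤ C
  τge : ℤ → C ⥤ C
  τleLE : ∀ (n : ℤ) (X : C), t.le n ((τle n).obj X)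
  τgeGE : ∀ (n : ℤ) (X : C), t.ge n ((τge n).obj X)
  ι : ∀ n : ℤ, τle n ⟶ 𝟭 C
  π : ∀ n : ℤ, 𝟭 C ⟶ τge n
  le_univ : ∀ (n : ℤ) (X Y : C), t.le n X →
    Function.Bijective (fun (f : X ⟶ (τle n).obj Y) => f ≫ (ι n).app Y)
  ge_univ : ∀ (n : ℤ) (X Y : C), t.ge n Y →
    Function.Bijective (fun (f : (τge n).obj X ⟶ Y) => (π n).app X ≫ f)
  δ : ∀ (n : ℤ) (X : C), (τge (n + 1)).obj X ⟶ ((τle n).obj X)⟦(1 : ℤ)⟧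
  tri : ∀ (n : ℤ) (X : C),
    Triangle.mk ((ι n).app X) ((π (n + 1)).app X) (δ n X) ∈ distTriang C
  τge_LE : ∀ (n m : ℤ) (X : C), t.le m X → t.le m ((τge n).obj X)

variable {t : TStructure C}

/-- The cohomological functor `H^0 = τ≥0 τ≤0 : C ⥤ Heart t`. -/
def H0 (d : TruncData t) : C ⥤ Heart t :=
  ObjectProperty.lift _ (d.τle 0 ⋙ d.τge 0)
    (fun X => ⟨d.τge_LE 0 0 _ (d.τleLE 0 X), d.τgeGE 0 _⟩)

/-- The cohomology functors `H^n(X) = H^0(X⟦n⟧)`. -/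
def Hn (d : TruncData t) (n : ℤ) : C ⥤ Heart t :=
  shiftFunctor C n ⋙ H0 d

/-- An object `E` is a derived injective if there is an injective object `I` of the heart
and a natural isomorphism `T(−, E) ≅ T^♥(H^0(−), I)`. -/
def IsDerivedInjective (d : TruncData t) (E : C) : Prop :=
  ∃ I : Heart t, Injective I ∧ Nonempty (yoneda.obj E ≅ (H0 d).op ⋙ yoneda.obj I)

/-- The t-structure is non-degenerate if objects with vanishing cohomologies are zero. -/
def NonDegenerate (d : TruncData t) : Prop :=
  ∀ X : C, (∀ n : ℤ, IsZero ((Hn d n).obj X)) → IsZero X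

end DGP

open DGP

set_option linter.unnecessarySimpa false

namespace DGPAux

variable {C : Type*} [Category C] [Preadditive C] [HasZeroObject C] [HasShift C ℤ]
  [∀ n : ℤ, (shiftFunctor C n).Additive] [Pretriangulated C]

lemma hom_zero (t : TStructure C) {X Y : C} (f : X ⟶ Y) (a b : ℤ) (hab : a < b)
    (hX : t.le a X) (hY : t.ge b Y) : f = 0 := by
  have hY' : t.ge (a + 1) Y := t.ge_antitone (show a + 1 ≤ b by omega) Y hY
  have h1 : t.le 0 (X⟦a⟧) := t.le_shift a a 0 (by omega) X hX
  have h2 : t.ge 1 (Y⟦a⟧) := t.ge_shift (a + 1) a 1 rfl Y hY'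
  have h3 : (shiftFunctor C a).map f = 0 := t.zero' _ h1 h2
  apply (shiftFunctor C a).map_injective
  rw [h3, Functor.map_zero]

variable {t : TStructure C}

lemma pi_isIso (d : TruncData t) {X : C} (hX : t.ge 0 X) : IsIso ((d.π 0).app X) := by
  obtain ⟨r, hr⟩ := (d.ge_univ 0 X X hX).2 (𝟙 X)
  have hr' : (d.π 0).app X ≫ r = 𝟙 X := hr
  have h2 : r ≫ (d.π 0).app X = 𝟙 _ := by
    apply (d.ge_univ 0 X _ (d.τgeGE 0 X)).1
    show (d.π 0).app X ≫ (r ≫ (d.π 0).app X) = (d.π 0).app X ≫ 𝟙 _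
    rw [← Category.assoc, hr']; simp
  exact ⟨r, hr', h2⟩

lemma iota_isIso (d : TruncData t) {X : C} (hX : t.le 0 X) : IsIso ((d.ι 0).app X) := by
  obtain ⟨s, hs⟩ := (d.le_univ 0 X X hX).2 (𝟙 X)
  have hs' : s ≫ (d.ι 0).app X = 𝟙 X := hs
  have h2 : (d.ι 0).app X ≫ s = 𝟙 _ := by
    apply (d.le_univ 0 _ X (d.τleLE 0 X)).1
    show ((d.ι 0).app X ≫ s) ≫ (d.ι 0).app X = 𝟙 _ ≫ (d.ι 0).app X
    rw [Category.assoc, hs']; simp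
  exact ⟨s, h2, hs'⟩

lemma ge_crit (d : TruncData t) {Y : C} (h : ∀ W, t.le (-1) W → ∀ g : W ⟶ Y, g = 0) :
    t.ge 0 Y := by
  have hz : IsZero ((d.τle (-1)).obj Y) := by
    rw [IsZero.iff_id_eq_zero]
    apply (d.le_univ (-1) _ Y (d.τleLE (-1) Y)).1
    show 𝟙 _ ≫ (d.ι (-1)).app Y = 0 ≫ (d.ι (-1)).app Y
    rw [Category.id_comp, zero_comp]
    exact h _ (d.τleLE (-1) Y) _
  have hIso : IsIso ((d.π (-1 + 1)).app Y) :=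
    (Triangle.isZero₁_iff_isIso₂ _ (d.tri (-1) Y)).1 hz
  have hIso' : IsIso ((d.π 0).app Y) := hIso
  exact (t.ge 0).prop_of_iso (@asIso _ _ _ _ _ hIso').symm (d.τgeGE 0 Y)

lemma H0_zero_of_ge_one (d : TruncData t) {X : C} (hX : t.ge 1 X) :
    𝟙 ((d.τge 0).obj ((d.τle 0).obj X)) = 0 := by
  have h1 : 𝟙 ((d.τle 0).obj X) = 0 := by
    apply (d.le_univ 0 _ X (d.τleLE 0 X)).1
    show 𝟙 _ ≫ (d.ι 0).app X = 0 ≫ (d.ι 0).app X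
    rw [Category.id_comp, zero_comp]
    exact hom_zero t _ 0 1 (by omega) (d.τleLE 0 X) hX
  have hπ0 : (d.π 0).app ((d.τle 0).obj X) = 0 := by
    calc (d.π 0).app ((d.τle 0).obj X)
        = 𝟙 ((d.τle 0).obj X) ≫ (d.π 0).app ((d.τle 0).obj X) := by simp
      _ = 0 := by rw [h1, zero_comp]
  apply (d.ge_univ 0 ((d.τle 0).obj X) _ (d.τgeGE 0 _)).1
  show (d.π 0).app _ ≫ 𝟙 _ = (d.π 0).app _ ≫ 0
  rw [hπ0]; simp

lemma H0_zero_of_le_negone (d : TruncData t) {X : C} (hX : t.le (-1) X) :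
    𝟙 ((d.τge 0).obj ((d.τle 0).obj X)) = 0 := by
  have h0 : t.le 0 X := t.le_monotone (by omega) X hX
  have hι : IsIso ((d.ι 0).app X) := iota_isIso d h0
  have hle : t.le (-1) ((d.τle 0).obj X) :=
    (t.le (-1)).prop_of_iso (@asIso _ _ _ _ _ hι).symm hX
  exact hom_zero t _ (-1) 0 (by omega) (d.τge_LE 0 (-1) _ hle) (d.τgeGE 0 _)

lemma hom_from_shift_zero {E : C} (hvan : ∀ Z, t.ge 0 Z → ∀ f : Z⟦(-1 : ℤ)⟧ ⟶ E, f = 0)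
    {V : C} (hV : t.ge 1 V) (g : V ⟶ E) : g = 0 := by
  have hZ : t.ge 0 (V⟦(1 : ℤ)⟧) := t.ge_shift 1 1 0 (by omega) V hV
  have e1 := shiftFunctorCompIsoId C (1 : ℤ) (-1 : ℤ) (by omega)
  have h := hvan _ hZ (e1.hom.app V ≫ g)
  have h2 : e1.inv.app V ≫ (e1.hom.app V ≫ g) = g := by
    rw [← Category.assoc, Iso.inv_hom_id_app]; simp
  rw [← h2, h, comp_zero]


lemma mono_hom_zero (d : TruncData t) {A B : Heart t} (m : A ⟶ B) [Mono m]
    {V : C} (hV : t.le 0 V) (k : V ⟶ A.obj) (hk : k ≫ (heartι t).map m = 0) : k = 0 := by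
  obtain ⟨k₁, hk₁⟩ := (d.ge_univ 0 V A.obj A.property.2).2 k
  have hk₁' : (d.π 0).app V ≫ k₁ = k := hk₁
  have h2 : k₁ ≫ (heartι t).map m = 0 := by
    apply (d.ge_univ 0 V B.obj B.property.2).1
    show (d.π 0).app V ≫ (k₁ ≫ (heartι t).map m) = (d.π 0).app V ≫ 0
    rw [comp_zero, ← Category.assoc, hk₁']
    exact hk
  let Y : Heart t := ⟨(d.τge 0).obj V, d.τge_LE 0 0 V hV, d.τgeGE 0 V⟩
  let k₁' : Y ⟶ A := ObjectProperty.homMk k₁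
  have h4 : k₁' ≫ m = (0 : Y ⟶ A) ≫ m := by
    rw [zero_comp]
    apply ObjectProperty.hom_ext
    exact h2
  have h5 : k₁' = 0 := Mono.right_cancellation _ _ h4
  have h6 : k₁ = 0 := congrArg (fun x => x.hom) h5
  rw [← hk₁', h6, comp_zero]

lemma step1_bij (d : TruncData t) {E : C}
    (hvan : ∀ Z, t.ge 0 Z → ∀ f : Z⟦(-1 : ℤ)⟧ ⟶ E, f = 0) (X : C) :
    Function.Bijective (fun f : X ⟶ E => (d.ι 0).app X ≫ f) := by
  constructor
  · intro f₁ f₂ h12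
    have h12' : (d.ι 0).app X ≫ f₁ = (d.ι 0).app X ≫ f₂ := h12
    have h : (d.ι 0).app X ≫ (f₁ - f₂) = 0 := by
      rw [Preadditive.comp_sub, h12', sub_self]
    obtain ⟨e', he'⟩ := Triangle.yoneda_exact₂ _ (d.tri 0 X) (f₁ - f₂) h
    have he0 : e' = 0 := hom_from_shift_zero hvan (by simpa using d.τgeGE (0 + 1) X) e'
    rw [he0, comp_zero] at he'
    exact sub_eq_zero.1 he'
  · intro g
    obtain ⟨f, hf⟩ := Triangle.yoneda_exact₂ _
      (inv_rot_of_distTriang _ (d.tri 0 X)) g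
      (hvan _ (t.ge_antitone (show (0:ℤ) ≤ 0 + 1 by omega) _ (d.τgeGE (0 + 1) X)) _)
    exact ⟨f, hf.symm⟩

end DGPAux

open DGPAux

/-- An object `E` of a triangulated category with a t-structure is a derived injective
(i.e. there are an injective object `I` of the heart and a natural isomorphism
`T(−, E) ≅ T^♥(H^0(−), I)`) if and only if `E ∈ T_{≥0}` and `T(Z[-1], E) ≅ 0` for every
`Z ∈ T_{≥0}`. -/
theorem stmt7 {C : Type*} [Category C]
    [Preadditive C] [HasZeroObject C] [HasShift C ℤ] [∀ n : ℤ, (shiftFunctor C n).Additive]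
    [Pretriangulated C]
    (t : TStructure C) (d : TruncData t) (E : C) :
    IsDerivedInjective d E ↔
      (t.ge 0 E ∧ ∀ (Z : C), t.ge 0 Z → ∀ f : Z⟦(-1 : ℤ)⟧ ⟶ E, f = 0) := by
  constructor
  · rintro ⟨I, hI, ⟨e⟩⟩
    have key : ∀ (X : C), 𝟙 ((d.τge 0).obj ((d.τle 0).obj X)) = 0 → ∀ f : X ⟶ E, f = 0 := by
      intro X hX f
      have hu : ∀ u : ((H0 d).obj X ⟶ I), (heartι t).map u = 0 := by
        intro u
        have hc : ∀ v : (d.τge 0).obj ((d.τle 0).obj X) ⟶ I.obj, v = 0 := fun v => by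
          rw [← Category.id_comp v, hX, zero_comp]
        exact hc _
      have hsub : e.hom.app (op X) f = e.hom.app (op X) (0 : X ⟶ E) :=
        (heartι t).map_injective ((hu _).trans (hu _).symm)
      calc f = e.inv.app (op X) (e.hom.app (op X) f) := by
            simpa using (congr_fun (e.hom_inv_id_app (op X)) f).symm
        _ = e.inv.app (op X) (e.hom.app (op X) (0 : X ⟶ E)) := by rw [hsub]
        _ = (0 : X ⟶ E) := by simpa using congr_fun (e.hom_inv_id_app (op X)) (0 : X ⟶ E)
    exact ⟨ge_crit d (fun W hW g => key W (H0_zero_of_le_negone d hW) g),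
      fun Z hZ f => key _ (H0_zero_of_ge_one d (t.ge_shift 0 (-1) 1 (by omega) Z hZ)) f⟩
  · rintro ⟨hE, hvan⟩
    let I : Heart t := ⟨(d.τge 0).obj ((d.τle 0).obj E),
      d.τge_LE 0 0 _ (d.τleLE 0 E), d.τgeGE 0 _⟩
    have hτ : t.ge 0 ((d.τle 0).obj E) := ge_crit d (fun W hW g => by
      apply (d.le_univ 0 W E (t.le_monotone (by omega) W hW)).1
      show g ≫ (d.ι 0).app E = (0 : W ⟶ (d.τle 0).obj E) ≫ (d.ι 0).app E
      rw [zero_comp]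
      exact hom_zero t _ (-1) 0 (by omega) hW hE)
    haveI hπ : IsIso ((d.π 0).app ((d.τle 0).obj E)) := pi_isIso d hτ
    have hInj : Injective I := by
      constructor
      intro A B g m hm
      haveI := hm
      obtain ⟨Z, u, v, hT⟩ := Pretriangulated.distinguished_cocone_triangle ((heartι t).map m)
      have hZ : t.ge 0 Z := by
        apply ge_crit d
        intro W hW w
        have hq : (w ≫ v) = 0 := by
          have hvm : v ≫ ((heartι t).map m)⟦(1 : ℤ)⟧' = 0 := by
            exact comp_distTriang_mor_zero₃₁ _ hT
          have hqm : (w ≫ v) ≫ ((heartι t).map m)⟦(1 : ℤ)⟧' = 0 := by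
            rw [Category.assoc, hvm, comp_zero]
          have e1 := shiftFunctorCompIsoId C (1 : ℤ) (-1 : ℤ) (by omega)
          have hnat : e1.hom.app A.obj ≫ (heartι t).map m
              = (shiftFunctor C (-1 : ℤ)).map (((heartι t).map m)⟦(1 : ℤ)⟧')
                  ≫ e1.hom.app B.obj := by
            simpa using (e1.hom.naturality ((heartι t).map m)).symm
          have hV : t.le 0 (W⟦(-1 : ℤ)⟧) := t.le_shift (-1) (-1) 0 (by omega) W hW
          have hk : ((shiftFunctor C (-1 : ℤ)).map (w ≫ v) ≫ e1.hom.app A.obj)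
              ≫ (heartι t).map m = 0 := by
            rw [Category.assoc, hnat, ← Category.assoc, ← Functor.map_comp, hqm,
              Functor.map_zero, zero_comp]
          have hk0 := mono_hom_zero d m hV _ hk
          have hsh : (shiftFunctor C (-1 : ℤ)).map (w ≫ v) = 0 := by
            rw [← cancel_mono (e1.hom.app A.obj), zero_comp]
            exact hk0
          apply (shiftFunctor C (-1 : ℤ)).map_injective
          rw [hsh, Functor.map_zero]
        obtain ⟨w2, hw2⟩ := Triangle.coyoneda_exact₃ _ hT w hq
        rw [hw2, hom_zero t w2 (-1) 0 (by omega) hW B.property.2, zero_comp]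
        rfl
      have h0 : (Triangle.mk ((heartι t).map m) u v).invRotate.mor₁
          ≫ ((heartι t).map g ≫ inv ((d.π 0).app ((d.τle 0).obj E)) ≫ (d.ι 0).app E) = 0 :=
        hvan Z hZ _
      obtain ⟨h, hh⟩ := Triangle.yoneda_exact₂ _ (inv_rot_of_distTriang _ hT) _ h0
      obtain ⟨h₁, hh₁⟩ := (d.le_univ 0 B.obj E B.property.1).2 h
      have hh₁' : h₁ ≫ (d.ι 0).app E = h := hh₁
      have hmain : (heartι t).map m ≫ h₁
          = (heartι t).map g ≫ inv ((d.π 0).app ((d.τle 0).obj E)) := by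
        apply (d.le_univ 0 A.obj E A.property.1).1
        show ((heartι t).map m ≫ h₁) ≫ (d.ι 0).app E
          = ((heartι t).map g ≫ inv ((d.π 0).app ((d.τle 0).obj E))) ≫ (d.ι 0).app E
        rw [Category.assoc, hh₁', Category.assoc]
        exact hh.symm
      let gBC : B.obj ⟶ (d.τge 0).obj ((d.τle 0).obj E) := h₁ ≫ (d.π 0).app ((d.τle 0).obj E)
      refine ⟨(show B ⟶ I from ObjectProperty.homMk gBC), ?_⟩
      apply (heartι t).map_injective
      rw [Functor.map_comp]
      show (heartι t).map m ≫ (h₁ ≫ (d.π 0).app ((d.τle 0).obj E)) = (heartι t).map g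
      rw [← Category.assoc, hmain, Category.assoc, IsIso.inv_hom_id, Category.comp_id]
    let α : yoneda.obj E ⟶ (d.τle 0).op ⋙ yoneda.obj E :=
      { app := fun X => TypeCat.ofHom (fun f => (d.ι 0).app (unop X) ≫ f)
        naturality := by
          intro X Y gg
          ext f
          dsimp
          rw [← Category.assoc, ← Category.assoc]
          congr 1
          simpa using ((d.ι 0).naturality gg.unop).symm }
    haveI : ∀ X, IsIso (α.app X) := fun X =>
      (isIso_iff_bijective _).2 (step1_bij d hvan (unop X))
    haveI : IsIso α := NatIso.isIso_of_isIso_app α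
    let β : (d.τle 0).op ⋙ yoneda.obj ((d.τle 0).obj E) ⟶ (d.τle 0).op ⋙ yoneda.obj E :=
      Functor.whiskerLeft (d.τle 0).op (yoneda.map ((d.ι 0).app E))
    haveI : ∀ X, IsIso (β.app X) := fun X =>
      (isIso_iff_bijective _).2 (d.le_univ 0 ((d.τle 0).obj (unop X)) E (d.τleLE 0 (unop X)))
    haveI : IsIso β := NatIso.isIso_of_isIso_app β
    let γ : (d.τle 0).op ⋙ yoneda.obj ((d.τle 0).obj E)
        ≅ (d.τle 0).op ⋙ yoneda.obj ((d.τge 0).obj ((d.τle 0).obj E)) :=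
      Functor.isoWhiskerLeft (d.τle 0).op (asIso (yoneda.map ((d.π 0).app ((d.τle 0).obj E))))
    let δt : (d.τle 0 ⋙ d.τge 0).op ⋙ yoneda.obj ((d.τge 0).obj ((d.τle 0).obj E)) ⟶
        (d.τle 0).op ⋙ yoneda.obj ((d.τge 0).obj ((d.τle 0).obj E)) :=
      { app := fun X => TypeCat.ofHom (fun f => (d.π 0).app ((d.τle 0).obj (unop X)) ≫ f)
        naturality := by
          intro X Y gg
          ext f
          dsimp
          rw [← Category.assoc, ← Category.assoc]
          congr 1
          simpa using ((d.π 0).naturality ((d.τle 0).map gg.unop)).symm }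
    haveI : ∀ X, IsIso (δt.app X) := fun X =>
      (isIso_iff_bijective _).2
        (d.ge_univ 0 ((d.τle 0).obj (unop X)) _ (d.τgeGE 0 ((d.τle 0).obj E)))
    haveI : IsIso δt := NatIso.isIso_of_isIso_app δt
    let ε : (H0 d).op ⋙ yoneda.obj I
        ≅ (d.τle 0 ⋙ d.τge 0).op ⋙ yoneda.obj ((d.τge 0).obj ((d.τle 0).obj E)) :=
      NatIso.ofComponents (fun X => (ObjectProperty.fullyFaithfulι _).homEquiv.toIso) (by intros; ext; rfl)
    exact ⟨I, hInj, ⟨asIso α ≪≫ (asIso β).symm ≪≫ γ ≪≫ (asIso δt).symm ≪≫ ε.symm⟩⟩
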